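/- Let n ≥ 1 and ħ > 0, and let a_σ : ℝ^{2n} → ℂ be integrable (a_σ ∈ L¹(ℝ^{2n})). For a Schwartz function f on ℝⁿ define the Weyl-type operator Âf(x) = (2πħ)^{−n} ∫_{ℝ^{2n}} a_σ(z₀) (T̂(z₀)f)(x) dz₀, and for a bounded continuous function F on ℝ^{2n} define the Bopp-type operator ÃF(z) = (2πħ)^{−n} ∫_{ℝ^{2n}} a_σ(z₀) (T̃(z₀)F)(z) dz₀ (both integrals converge absolutely). Then for all Schwartz functions f, g on ℝⁿ and every z ∈ ℝ^{2n}, Ã(W(f,g))(z) = W(Âf, g)(z). -/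

import Mathlib

open Matrix MeasureTheory Real

/-- The standard symplectic form `σ(z,z') = (Jz)·z'` on `ℝ²ⁿ = (Fin n ⊕ Fin n) → ℝ`. -/
noncomputable def sympForm {n : ℕ} (z z' : Fin n ⊕ Fin n → ℝ) : ℝ :=
  ((Matrix.fromBlocks 0 1 (-1) 0 : Matrix (Fin n ⊕ Fin n) (Fin n ⊕ Fin n) ℝ) *ᵥ z) ⬝ᵥ z'

/-- The phase-space shift `T̃(z₀)F(z) = e^{−(i/ℏ)σ(z,z₀)} F(z − z₀/2)`. -/
noncomputable def phaseShift {n : ℕ} (ℏ : ℝ) (z₀ : Fin n ⊕ Fin n → ℝ)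
    (F : (Fin n ⊕ Fin n → ℝ) → ℂ) : (Fin n ⊕ Fin n → ℝ) → ℂ := fun z =>
  Complex.exp (-(Complex.I / ℏ) * (sympForm z z₀ : ℝ)) * F (z - (1 / 2 : ℝ) • z₀)

/-- The Heisenberg–Weyl operator
`T̂(z₀)f(x) = e^{(i/ℏ)(p₀·x − p₀·x₀/2)} f(x − x₀)`, where `x₀ = z₀ ∘ Sum.inl`,
`p₀ = z₀ ∘ Sum.inr`. -/
noncomputable def heisenbergWeyl {n : ℕ} (ℏ : ℝ) (z₀ : Fin n ⊕ Fin n → ℝ)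
    (f : (Fin n → ℝ) → ℂ) : (Fin n → ℝ) → ℂ := fun x =>
  Complex.exp ((Complex.I / ℏ) *
      (((z₀ ∘ Sum.inr) ⬝ᵥ x - (1 / 2) * ((z₀ ∘ Sum.inr) ⬝ᵥ (z₀ ∘ Sum.inl)) : ℝ))) *
    f (x - (z₀ ∘ Sum.inl))

/-- The cross-Wigner transform. -/
noncomputable def crossWigner {n : ℕ} (ℏ : ℝ) (f g : (Fin n → ℝ) → ℂ)
    (z : Fin n ⊕ Fin n → ℝ) : ℂ :=
  (((2 * π * ℏ) ^ (-(n : ℝ)) : ℝ) : ℂ) *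
    ∫ y : Fin n → ℝ, Complex.exp (-(Complex.I / ℏ) * ((z ∘ Sum.inr) ⬝ᵥ y : ℝ)) *
      f ((z ∘ Sum.inl) + (1 / 2 : ℝ) • y) *
      (starRingEnd ℂ) (g ((z ∘ Sum.inl) - (1 / 2 : ℝ) • y))

/-- The Weyl-type operator `Âf(x) = (2πℏ)^{−n} ∫ a_σ(z₀) T̂(z₀)f(x) dz₀`. -/
noncomputable def weylOp {n : ℕ} (ℏ : ℝ) (aσ : (Fin n ⊕ Fin n → ℝ) → ℂ)
    (f : (Fin n → ℝ) → ℂ) : (Fin n → ℝ) → ℂ := fun x =>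
  (((2 * π * ℏ) ^ (-(n : ℝ)) : ℝ) : ℂ) *
    ∫ z₀ : Fin n ⊕ Fin n → ℝ, aσ z₀ * heisenbergWeyl ℏ z₀ f x

/-- The Bopp-type operator `ÃF(z) = (2πℏ)^{−n} ∫ a_σ(z₀) T̃(z₀)F(z) dz₀`. -/
noncomputable def boppOp {n : ℕ} (ℏ : ℝ) (aσ : (Fin n ⊕ Fin n → ℝ) → ℂ)
    (F : (Fin n ⊕ Fin n → ℝ) → ℂ) : (Fin n ⊕ Fin n → ℝ) → ℂ := fun z =>
  (((2 * π * ℏ) ^ (-(n : ℝ)) : ℝ) : ℂ) *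
    ∫ z₀ : Fin n ⊕ Fin n → ℝ, aσ z₀ * phaseShift ℏ z₀ F z

/-- The symplectic form in coordinates: `σ(z,z') = p·x' − x·p'`. -/
lemma sympForm_eq {n : ℕ} (z z' : Fin n ⊕ Fin n → ℝ) :
    sympForm z z' = (z ∘ Sum.inr) ⬝ᵥ (z' ∘ Sum.inl) - (z ∘ Sum.inl) ⬝ᵥ (z' ∘ Sum.inr) := by
  unfold sympForm
  rw [Matrix.fromBlocks_mulVec]
  rw [show z' = ((z' ∘ Sum.inl) ⊕ᵥ (z' ∘ Sum.inr)) from (Sum.elim_comp_inl_inr z').symm]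
  rw [sumElim_dotProduct_sumElim]
  simp [Matrix.neg_mulVec, neg_dotProduct]
  ring_nf

/-- Pointwise intertwining: `W(T̂(z₀)f, g) = T̃(z₀) W(f,g)`. -/
lemma crossWigner_heisenbergWeyl {n : ℕ} (ℏ : ℝ) (f g : (Fin n → ℝ) → ℂ)
    (z₀ z : Fin n ⊕ Fin n → ℝ) :
    crossWigner ℏ (heisenbergWeyl ℏ z₀ f) g z = phaseShift ℏ z₀ (crossWigner ℏ f g) z := by
  unfold crossWigner heisenbergWeyl phaseShift
  set x := z ∘ Sum.inl with hx
  set p := z ∘ Sum.inr with hp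
  set x₀ := z₀ ∘ Sum.inl with hx0
  set p₀ := z₀ ∘ Sum.inr with hp0
  have hcl : (z - (1/2 : ℝ) • z₀) ∘ Sum.inl = x - (1/2 : ℝ) • x₀ := rfl
  have hcr : (z - (1/2 : ℝ) • z₀) ∘ Sum.inr = p - (1/2 : ℝ) • p₀ := rfl
  beta_reduce
  rw [hcl, hcr]
  conv_rhs => rw [← mul_assoc, mul_comm (Complex.exp _), mul_assoc, ← integral_const_mul]
  congr 1
  rw [← integral_add_right_eq_self _ x₀]
  congr 1
  funext u
  have hA : x + (1/2 : ℝ) • (u + x₀) - x₀ = x - (1/2 : ℝ) • x₀ + (1/2 : ℝ) • u := by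
    funext i; simp; ring
  have hB : x - (1/2 : ℝ) • (u + x₀) = x - (1/2 : ℝ) • x₀ - (1/2 : ℝ) • u := by
    funext i; simp; ring
  rw [hA, hB]
  rw [← mul_assoc, ← mul_assoc, ← Complex.exp_add, ← mul_assoc, ← Complex.exp_add]
  congr 2
  have h1 : p ⬝ᵥ (u + x₀) = p ⬝ᵥ u + p ⬝ᵥ x₀ := dotProduct_add _ _ _
  have h2 : p₀ ⬝ᵥ (x + (1/2 : ℝ) • (u + x₀))
      = p₀ ⬝ᵥ x + (1/2) * (p₀ ⬝ᵥ u) + (1/2) * (p₀ ⬝ᵥ x₀) := by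
    rw [dotProduct_add, dotProduct_smul, dotProduct_add]; simp [smul_eq_mul]; ring
  have h3 : (p - (1/2 : ℝ) • p₀) ⬝ᵥ u = p ⬝ᵥ u - (1/2) * (p₀ ⬝ᵥ u) := by
    rw [sub_dotProduct, smul_dotProduct]; simp [smul_eq_mul]
  have h4 : sympForm z z₀ = p ⬝ᵥ x₀ - p₀ ⬝ᵥ x := by
    rw [sympForm_eq, dotProduct_comm (z ∘ Sum.inl)]
  rw [h1, h2, h3, h4]
  push_cast
  ring

lemma norm_exp_neg_I_div_mul (ℏ r : ℝ) : ‖Complex.exp (-(Complex.I / ℏ) * (r : ℂ))‖ = 1 := by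
  rw [show -(Complex.I / (ℏ:ℂ)) * (r:ℂ) = ((-(r/ℏ) : ℝ) : ℂ) * Complex.I by push_cast; ring]
  simp [Complex.norm_exp]

lemma norm_exp_I_div_mul (ℏ r : ℝ) : ‖Complex.exp ((Complex.I / ℏ) * (r : ℂ))‖ = 1 := by
  rw [show (Complex.I / (ℏ:ℂ)) * (r:ℂ) = (((r/ℏ) : ℝ) : ℂ) * Complex.I by push_cast; ring]
  simp [Complex.norm_exp]

theorem bopp_weyl_intertwine
    (n : ℕ) (hn : 1 ≤ n) (ℏ : ℝ) (hℏ : 0 < ℏ)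
    (aσ : (Fin n ⊕ Fin n → ℝ) → ℂ)
    (haσ : Integrable aσ (volume : Measure (Fin n ⊕ Fin n → ℝ)))
    (f g : SchwartzMap (Fin n → ℝ) ℂ) (z : Fin n ⊕ Fin n → ℝ) :
    boppOp ℏ aσ (crossWigner ℏ ⇑f ⇑g) z = crossWigner ℏ (weylOp ℏ aσ ⇑f) ⇑g z := by
  set C : ℝ := (2 * π * ℏ) ^ (-(n : ℝ)) with hC
  set x := z ∘ Sum.inl with hxdef
  set p := z ∘ Sum.inr with hpdef
  -- the joint integrand
  set F : (Fin n → ℝ) → (Fin n ⊕ Fin n → ℝ) → ℂ := fun y z₀ =>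
    Complex.exp (-(Complex.I / ℏ) * (p ⬝ᵥ y : ℝ)) *
      (aσ z₀ * heisenbergWeyl ℏ z₀ (⇑f) (x + (1/2 : ℝ) • y)) *
      (starRingEnd ℂ) (g (x - (1/2 : ℝ) • y)) with hF
  -- bound on f
  obtain ⟨M, hM⟩ : ∃ M : ℝ, ∀ x, ‖f x‖ ≤ M := by
    obtain ⟨M, hM⟩ := f.decay 0 0
    exact ⟨M, fun x => by simpa using hM.2 x⟩
  -- integrability of y ↦ g (x - ½ y)
  have hg2 : Integrable (fun y : Fin n → ℝ => g (x - (1/2 : ℝ) • y)) volume := by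
    have h1 : Integrable (fun t : Fin n → ℝ => g (x - t)) volume :=
      (g.integrable (μ := volume)).comp_sub_left x
    have := (integrable_comp_smul_iff (volume : Measure (Fin n → ℝ))
      (fun t => g (x - t)) (R := (1/2 : ℝ)) (by norm_num)).mpr h1
    simpa using this
  -- measurability of the joint integrand
  have hFmeas : AEStronglyMeasurable (Function.uncurry F)
      ((volume : Measure (Fin n → ℝ)).prod (volume : Measure (Fin n ⊕ Fin n → ℝ))) := by
    have hcont1 : Continuous fun q : (Fin n → ℝ) × (Fin n ⊕ Fin n → ℝ) =>
        Complex.exp (-(Complex.I / ℏ) * (p ⬝ᵥ q.1 : ℝ)) := by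
      apply Complex.continuous_exp.comp
      apply Continuous.mul continuous_const
      exact Complex.continuous_ofReal.comp
        ((continuous_const (y := p)).dotProduct continuous_fst)
    have hcont2 : Continuous fun q : (Fin n → ℝ) × (Fin n ⊕ Fin n → ℝ) =>
        heisenbergWeyl ℏ q.2 (⇑f) (x + (1/2 : ℝ) • q.1) := by
      unfold heisenbergWeyl
      apply Continuous.mul
      · apply Complex.continuous_exp.comp
        apply Continuous.mul continuous_const
        apply Complex.continuous_ofReal.comp
        apply Continuous.sub
        · apply Continuous.dotProduct
          · exact Continuous.comp (Pi.continuous_precomp Sum.inr) continuous_snd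
          · exact continuous_const.add (continuous_const_smul _ |>.comp continuous_fst)
        · apply Continuous.mul continuous_const
          apply Continuous.dotProduct
          · exact Continuous.comp (Pi.continuous_precomp Sum.inr) continuous_snd
          · exact Continuous.comp (Pi.continuous_precomp Sum.inl) continuous_snd
      · apply f.continuous.comp
        exact (continuous_const.add (continuous_const_smul _ |>.comp continuous_fst)).sub
          (Continuous.comp (Pi.continuous_precomp Sum.inl) continuous_snd)
    have hcont3 : Continuous fun q : (Fin n → ℝ) × (Fin n ⊕ Fin n → ℝ) =>
        (starRingEnd ℂ) (g (x - (1/2 : ℝ) • q.1)) := by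
      apply Complex.continuous_conj.comp
      exact g.continuous.comp
        (continuous_const.sub (continuous_const_smul _ |>.comp continuous_fst))
    exact ((hcont1.aestronglyMeasurable.mul
      ((haσ.1.comp_snd).mul hcont2.aestronglyMeasurable)).mul hcont3.aestronglyMeasurable)
  -- integrability of the joint integrand
  have hFint : Integrable (Function.uncurry F)
      ((volume : Measure (Fin n → ℝ)).prod (volume : Measure (Fin n ⊕ Fin n → ℝ))) := by
    have hbd : Integrable (fun q : (Fin n → ℝ) × (Fin n ⊕ Fin n → ℝ) =>
        (M * ‖g (x - (1/2 : ℝ) • q.1)‖) * ‖aσ q.2‖)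
        ((volume : Measure (Fin n → ℝ)).prod (volume : Measure (Fin n ⊕ Fin n → ℝ))) :=
      Integrable.mul_prod (hg2.norm.const_mul M) haσ.norm
    refine hbd.mono' hFmeas ?_
    refine Filter.Eventually.of_forall fun q => ?_
    simp only [Function.uncurry, hF]
    rw [norm_mul, norm_mul, norm_mul]
    rw [norm_exp_neg_I_div_mul, RCLike.norm_conj]
    unfold heisenbergWeyl
    rw [norm_mul, norm_exp_I_div_mul]
    have h1 : ‖f (x + (1/2 : ℝ) • q.1 - (q.2 ∘ Sum.inl))‖ ≤ M := hM _
    have h2 : (0:ℝ) ≤ ‖g (x - (1/2 : ℝ) • q.1)‖ := norm_nonneg _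
    calc 1 * (‖aσ q.2‖ * (1 * ‖f (x + (1/2 : ℝ) • q.1 - (q.2 ∘ Sum.inl))‖)) *
          ‖g (x - (1/2 : ℝ) • q.1)‖
        = ‖aσ q.2‖ * ‖f (x + (1/2 : ℝ) • q.1 - (q.2 ∘ Sum.inl))‖ *
          ‖g (x - (1/2 : ℝ) • q.1)‖ := by ring
      _ ≤ ‖aσ q.2‖ * M * ‖g (x - (1/2 : ℝ) • q.1)‖ := by
          apply mul_le_mul_of_nonneg_right _ h2
          exact mul_le_mul_of_nonneg_left h1 (norm_nonneg _)
      _ = (M * ‖g (x - (1/2 : ℝ) • q.1)‖) * ‖aσ q.2‖ := by ring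
  -- rewrite the LHS using the pointwise intertwining
  unfold boppOp
  beta_reduce
  have key : (fun z₀ => aσ z₀ * phaseShift ℏ z₀ (crossWigner ℏ ⇑f ⇑g) z)
      = fun z₀ => aσ z₀ * crossWigner ℏ (heisenbergWeyl ℏ z₀ ⇑f) ⇑g z := by
    funext z₀; rw [crossWigner_heisenbergWeyl]
  rw [key]
  -- rewrite the RHS, unfolding everything
  conv_rhs => unfold crossWigner weylOp
  beta_reduce
  -- pull the inner constant and factors through the z₀ integral
  have step1 : (fun y : Fin n → ℝ =>
      Complex.exp (-(Complex.I / ℏ) * (p ⬝ᵥ y : ℝ)) *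
        ((C : ℂ) * ∫ z₀, aσ z₀ * heisenbergWeyl ℏ z₀ (⇑f) (x + (1/2 : ℝ) • y)) *
        (starRingEnd ℂ) (g (x - (1/2 : ℝ) • y)))
      = fun y : Fin n → ℝ => (C : ℂ) * ∫ z₀, F y z₀ := by
    funext y
    rw [show ∀ a b c : ℂ, a * ((C:ℂ) * b) * c = (C:ℂ) * (a * b * c) from fun a b c => by ring]
    congr 1
    rw [mul_assoc, ← integral_mul_const, ← integral_const_mul]
    congr 1
    funext z₀
    simp only [hF]
    ring
  rw [step1, integral_const_mul]
  rw [integral_integral_swap hFint]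
  -- simplify the inner y-integral for each z₀
  have step2 : (fun z₀ => ∫ y, F y z₀)
      = fun z₀ => aσ z₀ * ∫ y, Complex.exp (-(Complex.I / ℏ) * (p ⬝ᵥ y : ℝ)) *
          heisenbergWeyl ℏ z₀ (⇑f) (x + (1/2 : ℝ) • y) *
          (starRingEnd ℂ) (g (x - (1/2 : ℝ) • y)) := by
    funext z₀
    rw [← integral_const_mul]
    congr 1
    funext y
    simp only [hF]
    ring
  conv_rhs => rw [step2, ← integral_const_mul]
  congr 1
  congr 1
  funext z₀
  unfold crossWigner
  beta_reduce
  rw [hxdef, hpdef] at *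
  ring
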